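/- McDiarmid's bounded differences inequality: Let X_1, ..., X_n be independent random variables with X_i taking values in 𝒳_i, let X = (X_1, ..., X_n), and let f : 𝒳 → ℝ be measurable with c-bounded differences on 𝒳 = ∏_{i=1}^n 𝒳_i, where c ∈ (ℝ⁺)^n. Let μ = E[f(X)]. Then for all ε ≥ 0, P[f(X) ≥ μ + ε] ≤ exp(−2ε² / Σ_{i=1}^n c_i²). -/

import Mathlib

open MeasureTheory ProbabilityTheory
open scoped Classical
open Real

universe u

lemma hoeffding_key (p : ℝ) (hp : 0 ≤ p) (hp1 : p ≤ 1) (u : ℝ) :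
    p * exp (-(1-p)*u) + (1-p) * exp (p*u) ≤ exp (u^2/8) := by
  set q : ℝ := 1 - p with hq
  have hq0 : 0 ≤ q := by simp [hq]; linarith
  -- F, G, G' definitions
  set F : ℝ → ℝ := fun u => p * exp (-q*u) + q * exp (p*u) with hF
  set G : ℝ → ℝ := fun u => p*q*(exp (p*u) - exp (-q*u)) with hG
  have hFpos : ∀ u, 0 < F u := by
    intro u
    rcases eq_or_lt_of_le hp with h | h
    · have hq1 : q = 1 := by rw [hq, ← h]; ring
      simp only [hF, ← h, hq1, zero_mul, one_mul, zero_add]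
      positivity
    · have h1 : 0 < p * exp (-q*u) := by positivity
      have h2 : 0 ≤ q * exp (p*u) := by positivity
      simp only [hF]; linarith
  have hFd : ∀ u, HasDerivAt F (G u) u := by
    intro u
    have h1 : HasDerivAt (fun u : ℝ => p * exp (-q*u)) (p * (exp (-q*u) * -q)) u := by
      exact (((hasDerivAt_id u).const_mul (-q)).exp).const_mul p |>.congr_deriv (by simp only [id_eq]; ring)
    have h2 : HasDerivAt (fun u : ℝ => q * exp (p*u)) (q * (exp (p*u) * p)) u := by
      exact (((hasDerivAt_id u).const_mul p).exp).const_mul q |>.congr_deriv (by simp only [id_eq]; ring)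
    exact (h1.add h2).congr_deriv (by simp only [hG]; ring)
  have hGd : ∀ u, HasDerivAt G (p*q*(p * exp (p*u) + q * exp (-q*u))) u := by
    intro u
    have h1 : HasDerivAt (fun u : ℝ => exp (p*u)) (exp (p*u) * p) u :=
      ((hasDerivAt_id u).const_mul p).exp.congr_deriv (by simp only [id_eq]; ring)
    have h2 : HasDerivAt (fun u : ℝ => exp (-q*u)) (exp (-q*u) * -q) u :=
      ((hasDerivAt_id u).const_mul (-q)).exp.congr_deriv (by simp only [id_eq]; ring)
    exact ((h1.sub h2).const_mul (p*q)).congr_deriv (by ring)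
  -- H := u/4 - G/F, monotone
  set H : ℝ → ℝ := fun u => u/4 - G u / F u with hH
  have hHd : ∀ u, HasDerivAt H
      (1/4 - (p*q*(p * exp (p*u) + q * exp (-q*u)) * F u - G u * G u) / (F u)^2) u := by
    intro u
    have hdiv := (hGd u).div (hFd u) (hFpos u).ne'
    exact ((hasDerivAt_id u).div_const 4).sub hdiv
  have hHd_nonneg : ∀ u, 0 ≤ 1/4 - (p*q*(p * exp (p*u) + q * exp (-q*u)) * F u - G u * G u) / (F u)^2 := by
    intro u
    rw [sub_nonneg, div_le_iff₀ (pow_pos (hFpos u) 2)]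
    have hA := exp_pos (-q*u)
    have hB := exp_pos (p*u)
    simp only [hF, hG, hq]
    nlinarith [sq_nonneg (p * exp (-q*u) - (1-p) * exp (p*u))]
  have hHmono : Monotone H := by
    apply monotone_of_deriv_nonneg
    · exact fun u => (hHd u).differentiableAt
    · intro u; rw [(hHd u).deriv]; exact hHd_nonneg u
  have hH0 : H 0 = 0 := by simp [hH, hG]
  -- Φ := u^2/8 - log (F u)
  set Φ : ℝ → ℝ := fun u => u^2/8 - Real.log (F u) with hΦ
  have hΦd : ∀ u, HasDerivAt Φ (H u) u := by
    intro u
    have h1 : HasDerivAt (fun u : ℝ => u^2/8) (u/4) u := by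
      simpa using ((hasDerivAt_pow 2 u).div_const 8).congr_deriv (by ring)
    exact (h1.sub ((hFd u).log (hFpos u).ne')).congr_deriv (by simp [hH])
  have hF0 : F 0 = 1 := by simp only [hF]; rw [hq]; simp
  have hΦ0 : Φ 0 = 0 := by simp [hΦ, hF0]
  have key : ∀ u, 0 ≤ Φ u := by
    intro u
    rcases le_or_gt 0 u with h | h
    · have hmono : MonotoneOn Φ (Set.Ici 0) := by
        apply monotoneOn_of_deriv_nonneg (convex_Ici 0)
          (fun x _ => (hΦd x).differentiableAt.continuousAt.continuousWithinAt)
          (fun x _ => (hΦd x).differentiableAt.differentiableWithinAt)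
        intro x hx
        rw [(hΦd x).deriv]
        rw [interior_Ici] at hx
        have := hHmono (le_of_lt hx)
        rw [hH0] at this; exact this
      have := hmono Set.self_mem_Ici (Set.mem_Ici.2 h) h
      rwa [hΦ0] at this
    · have hmono : AntitoneOn Φ (Set.Iic 0) := by
        apply antitoneOn_of_deriv_nonpos (convex_Iic 0)
          (fun x _ => (hΦd x).differentiableAt.continuousAt.continuousWithinAt)
          (fun x _ => (hΦd x).differentiableAt.differentiableWithinAt)
        intro x hx
        rw [(hΦd x).deriv]
        rw [interior_Iic] at hx
        have := hHmono (le_of_lt hx)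
        rw [hH0] at this; exact this
      have := hmono (Set.mem_Iic.2 h.le) Set.self_mem_Iic h.le
      rwa [hΦ0] at this
    -- conclude
  have hlog : Real.log (F u) ≤ u^2/8 := by have := key u; simp only [hΦ] at this; linarith
  calc p * exp (-(1-p)*u) + (1-p) * exp (p*u) = F u := by simp [hF, hq]
    _ = exp (Real.log (F u)) := (exp_log (hFpos u)).symm
    _ ≤ exp (u^2/8) := exp_le_exp.2 hlog

lemma integrable_of_abs_le {α : Type*} [MeasurableSpace α] {μ : Measure α} [IsFiniteMeasure μ]
    {h : α → ℝ} (hm : AEStronglyMeasurable h μ) {C : ℝ} (hC : ∀ x, |h x| ≤ C) :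
    Integrable h μ :=
  Integrable.mono' (integrable_const C) hm (Filter.Eventually.of_forall fun x => hC x)

lemma hoeffding_lemma_Icc {Ω : Type*} [MeasurableSpace Ω] (μ : Measure Ω)
    [IsProbabilityMeasure μ] {Y : Ω → ℝ} (hY : Measurable Y) {a b : ℝ}
    (hab : ∀ ω, Y ω ∈ Set.Icc a b) (t : ℝ) :
    ∫ ω, exp (t * Y ω) ∂μ ≤ exp (t * ∫ ω, Y ω ∂μ + t^2*(b-a)^2/8) := by
  have hne : Nonempty Ω := by
    by_contra h
    rw [not_nonempty_iff] at h
    have h1 : μ Set.univ = 1 := measure_univ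
    rw [Set.univ_eq_empty_iff.2 h] at h1
    simp at h1
  obtain ⟨ω₀⟩ := hne
  have hab' : a ≤ b := le_trans (hab ω₀).1 (hab ω₀).2
  -- integrability
  have hYint : Integrable Y μ :=
    integrable_of_abs_le hY.aestronglyMeasurable (C := max |a| |b|) (fun ω =>
      abs_le.2 ⟨le_trans (neg_le_neg (le_max_left |a| |b|)) (le_trans (neg_abs_le a) (hab ω).1),
        le_trans (hab ω).2 (le_trans (le_abs_self b) (le_max_right |a| |b|))⟩)
  have hexpint : Integrable (fun ω => exp (t * Y ω)) μ := by
    refine integrable_of_abs_le ((hY.const_mul t).exp).aestronglyMeasurable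
      (C := max (exp (t*a)) (exp (t*b))) (fun ω => ?_)
    rw [abs_of_pos (exp_pos _)]
    rcases le_or_gt 0 t with ht | ht
    · exact le_max_of_le_right (exp_le_exp.2 (mul_le_mul_of_nonneg_left (hab ω).2 ht))
    · exact le_max_of_le_left (exp_le_exp.2 (mul_le_mul_of_nonpos_left (hab ω).1 ht.le))
  set m : ℝ := ∫ ω, Y ω ∂μ with hm
  have hma : a ≤ m := by
    rw [hm]
    calc a = ∫ _, a ∂μ := by simp
    _ ≤ _ := integral_mono (integrable_const a) hYint (fun ω => (hab ω).1)
  have hmb : m ≤ b := by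
    rw [hm]
    calc ∫ ω, Y ω ∂μ ≤ ∫ _, b ∂μ := integral_mono hYint (integrable_const b) (fun ω => (hab ω).2)
    _ = b := by simp
  rcases eq_or_lt_of_le hab' with heq | hlt
  · -- a = b : Y is constant
    have hYa : ∀ ω, Y ω = a := fun ω => le_antisymm (heq ▸ (hab ω).2) (hab ω).1
    have hma' : m = a := le_antisymm (heq ▸ hmb) hma
    subst heq
    simp only [hYa, hma']
    simp
  · -- a < b
    have hba : (0:ℝ) < b - a := by linarith
    set p : ℝ := (b - m)/(b - a) with hp
    have hp0 : 0 ≤ p := div_nonneg (by linarith) hba.le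
    have hp1 : p ≤ 1 := (div_le_one hba).2 (by linarith)
    have h1p : 1 - p = (m - a)/(b - a) := by rw [hp]; field_simp; ring
    -- pointwise convexity bound
    have hpt : ∀ ω, exp (t * Y ω) ≤
        ((b - Y ω)/(b-a)) * exp (t*a) + ((Y ω - a)/(b-a)) * exp (t*b) := by
      intro ω
      have h1 : (0:ℝ) ≤ (b - Y ω)/(b-a) := div_nonneg (by linarith [(hab ω).2]) hba.le
      have h2 : (0:ℝ) ≤ (Y ω - a)/(b-a) := div_nonneg (by linarith [(hab ω).1]) hba.le
      have h3 : (b - Y ω)/(b-a) + (Y ω - a)/(b-a) = 1 := by field_simp; ring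
      have := convexOn_exp.2 (Set.mem_univ (t*a)) (Set.mem_univ (t*b)) h1 h2 h3
      simp only [smul_eq_mul] at this
      have harg : (b - Y ω)/(b-a) * (t*a) + (Y ω - a)/(b-a) * (t*b) = t * Y ω := by
        field_simp; ring
      rwa [harg] at this
    -- integrate
    have hI1 : Integrable (fun ω => ((b - Y ω)/(b-a)) * exp (t*a)) μ := by
      exact (((integrable_const b).sub hYint).div_const (b-a)).mul_const _
    have hI2 : Integrable (fun ω => ((Y ω - a)/(b-a)) * exp (t*b)) μ := by
      exact ((hYint.sub (integrable_const a)).div_const (b-a)).mul_const _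
    have hrhs_int : Integrable
        (fun ω => ((b - Y ω)/(b-a)) * exp (t*a) + ((Y ω - a)/(b-a)) * exp (t*b)) μ := by
      exact hI1.add hI2
    have hint_le := integral_mono hexpint hrhs_int hpt
    have hsub1 : ∫ ω, (b - Y ω) ∂μ = b - m := by
      rw [integral_sub (integrable_const b) hYint]; simp [← hm]
    have hsub2 : ∫ ω, (Y ω - a) ∂μ = m - a := by
      rw [integral_sub hYint (integrable_const a)]; simp [← hm]
    have hrhs_eq : ∫ ω, (((b - Y ω)/(b-a)) * exp (t*a) + ((Y ω - a)/(b-a)) * exp (t*b)) ∂μ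
        = p * exp (t*a) + (1-p) * exp (t*b) := by
      rw [integral_add hI1 hI2, integral_mul_const, integral_mul_const,
        integral_div, integral_div, hsub1, hsub2, hp, h1p]
    rw [hrhs_eq] at hint_le
    -- apply key inequality with u = t*(b-a)
    have hkey := hoeffding_key p hp0 hp1 (t*(b-a))
    have hta : t*a = t*m + (-(1-p)*(t*(b-a))) := by rw [h1p]; field_simp; ring
    have htb : t*b = t*m + (p*(t*(b-a))) := by rw [hp]; field_simp; ring
    calc ∫ ω, exp (t * Y ω) ∂μ ≤ p * exp (t*a) + (1-p) * exp (t*b) := hint_le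
      _ = exp (t*m) * (p * exp (-(1-p)*(t*(b-a))) + (1-p) * exp (p*(t*(b-a)))) := by
          rw [hta, htb, exp_add, exp_add]; ring
      _ ≤ exp (t*m) * exp ((t*(b-a))^2/8) := by
          apply mul_le_mul_of_nonneg_left hkey (exp_pos _).le
      _ = exp (t * m + t^2*(b-a)^2/8) := by rw [← exp_add]; ring_nf
    -- done

lemma hoeffding_lemma_osc {Ω : Type*} [MeasurableSpace Ω] (μ : Measure Ω)
    [IsProbabilityMeasure μ] {Y : Ω → ℝ} (hY : Measurable Y) {c : ℝ}
    (hosc : ∀ ω ω', |Y ω - Y ω'| ≤ c) (t : ℝ) :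
    ∫ ω, exp (t * Y ω) ∂μ ≤ exp (t * ∫ ω, Y ω ∂μ + t^2*c^2/8) := by
  have hne : Nonempty Ω := by
    by_contra h
    rw [not_nonempty_iff] at h
    have h1 : μ Set.univ = 1 := measure_univ
    rw [Set.univ_eq_empty_iff.2 h] at h1
    simp at h1
  obtain ⟨ω₀⟩ := hne
  have hbdd : BddBelow (Set.range Y) := by
    refine ⟨Y ω₀ - c, fun z hz => ?_⟩
    obtain ⟨ω, rfl⟩ := hz
    have := abs_le.1 (hosc ω₀ ω)
    linarith [this.2]
  set a : ℝ := sInf (Set.range Y) with ha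
  have hle : ∀ ω, a ≤ Y ω := fun ω => csInf_le hbdd (Set.mem_range_self ω)
  have hge : ∀ ω, Y ω ≤ a + c := by
    intro ω
    have : Y ω - c ≤ a := le_csInf ⟨Y ω₀, ω₀, rfl⟩ (fun z hz => by
      obtain ⟨ω', rfl⟩ := hz
      linarith [(abs_le.1 (hosc ω ω')).2])
    linarith
  have := hoeffding_lemma_Icc μ hY (a := a) (b := a + c) (fun ω => ⟨hle ω, hge ω⟩) t
  simpa using this

lemma abs_integral_le_of_abs_le {α : Type*} [MeasurableSpace α] {μ : Measure α}
    [IsProbabilityMeasure μ] {h : α → ℝ} (hm : AEStronglyMeasurable h μ) {C : ℝ}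
    (hC : ∀ x, |h x| ≤ C) : |∫ x, h x ∂μ| ≤ C := by
  calc |∫ x, h x ∂μ| ≤ ∫ x, |h x| ∂μ := by
        simpa using norm_integral_le_integral_norm h
    _ ≤ ∫ _, C ∂μ := integral_mono (integrable_of_abs_le hm hC).abs (integrable_const C)
        (fun x => hC x)
    _ = C := by simp


lemma mgf_pi_le (n : ℕ) : ∀ {𝒳 : Fin n → Type u} [∀ i, MeasurableSpace (𝒳 i)]
    [∀ i, Nonempty (𝒳 i)] (μ : ∀ i, Measure (𝒳 i)) [∀ i, IsProbabilityMeasure (μ i)]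
    (c : Fin n → ℝ) (_hc : ∀ i, 0 ≤ c i) (f : (∀ i, 𝒳 i) → ℝ) (_hf : Measurable f)
    (_hbd : ∀ x y, |f x - f y| ≤ ∑ i, if x i ≠ y i then c i else 0) (t : ℝ),
    ∫ x, exp (t * f x) ∂Measure.pi μ ≤
      exp (t * ∫ x, f x ∂Measure.pi μ + t^2 * (∑ i, (c i)^2) / 8) := by
  induction n with
  | zero =>
    intro 𝒳 _ _ μ _ c hc f hf hbd t
    have hconst : ∀ x : ∀ i, 𝒳 i, f x = f (fun i => i.elim0) :=
      fun x => congrArg f (Subsingleton.elim _ _)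
    simp only [hconst]
    rw [integral_const, integral_const]
    simp
  | succ n ih =>
    intro 𝒳 _ _ μ _ c hc f hf hbd t
    set e := MeasurableEquiv.piFinSuccAbove 𝒳 0 with he
    have hPres := measurePreserving_piFinSuccAbove μ 0
    set ν := μ 0 with hν
    set π' := Measure.pi (fun j => μ ((0 : Fin (n+1)).succAbove j)) with hπ'
    -- boundedness of f
    have x₀ : ∀ i, 𝒳 i := Classical.arbitrary _
    have hsum_bd : ∀ x y, |f x - f y| ≤ ∑ i, c i := fun x y =>
      (hbd x y).trans (Finset.sum_le_sum fun i _ => by split <;> simp [hc i])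
    set C : ℝ := |f x₀| + ∑ i, c i with hC
    have hfC : ∀ x, |f x| ≤ C := by
      intro x
      calc |f x| = |(f x - f x₀) + f x₀| := by ring_nf
        _ ≤ |f x - f x₀| + |f x₀| := abs_add_le _ _
        _ ≤ C := by rw [hC]; linarith [hsum_bd x x₀]
    have hexpC : ∀ s : ℝ, |s| ≤ C → |exp (t * s)| ≤ exp (|t| * C) := by
      intro s hs
      rw [abs_of_pos (exp_pos _)]
      apply exp_le_exp.2
      calc t * s ≤ |t * s| := le_abs_self _
        _ = |t| * |s| := abs_mul _ _
        _ ≤ |t| * C := mul_le_mul_of_nonneg_left hs (abs_nonneg t)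
    -- F on the product space
    set F : 𝒳 0 × (∀ j, 𝒳 ((0 : Fin (n+1)).succAbove j)) → ℝ := fun z => f (e.symm z) with hFdef
    have hFm : Measurable F := hf.comp e.symm.measurable
    have hFC : ∀ z, |F z| ≤ C := fun z => hfC _
    have hFint : Integrable F (ν.prod π') :=
      integrable_of_abs_le hFm.aestronglyMeasurable hFC
    have hFexpint : Integrable (fun z => exp (t * F z)) (ν.prod π') :=
      integrable_of_abs_le ((hFm.const_mul t).exp).aestronglyMeasurable
        (fun z => hexpC _ (hFC z))
    -- transfer integrals from pi to prod
    have h1 : ∫ z, exp (t * F z) ∂(ν.prod π') = ∫ x, exp (t * f x) ∂Measure.pi μ := by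
      rw [← hPres.integral_comp e.measurableEmbedding (fun z => exp (t * F z))]
      simp only [hFdef, ← he, MeasurableEquiv.symm_apply_apply]
    have h2 : ∫ z, F z ∂(ν.prod π') = ∫ x, f x ∂Measure.pi μ := by
      rw [← hPres.integral_comp e.measurableEmbedding F]
      simp only [hFdef, ← he, MeasurableEquiv.symm_apply_apply]
    -- coordinates of e.symm
    have hcoord0 : ∀ (x : 𝒳 0) y, (e.symm (x, y)) 0 = x := by
      intro x y
      rw [he, MeasurableEquiv.piFinSuccAbove_symm_apply]
      exact Fin.insertNth_apply_same 0 x y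
    have hcoordsa : ∀ (x : 𝒳 0) y j, (e.symm (x, y)) ((0 : Fin (n+1)).succAbove j) = y j := by
      intro x y j
      rw [he, MeasurableEquiv.piFinSuccAbove_symm_apply]
      exact Fin.insertNth_apply_succAbove 0 x y j
    -- g : integral over first coordinate
    set g : (∀ j, 𝒳 ((0 : Fin (n+1)).succAbove j)) → ℝ := fun y => ∫ x, F (x, y) ∂ν with hgdef
    have hgsm : StronglyMeasurable g :=
      hFm.stronglyMeasurable.integral_prod_left'
    have hgm : Measurable g := hgsm.measurable
    have hFym : ∀ y, Measurable (fun x => F (x, y)) :=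
      fun y => hFm.comp measurable_prodMk_right
    have hgC : ∀ y, |g y| ≤ C := fun y =>
      abs_integral_le_of_abs_le (hFym y).aestronglyMeasurable (fun x => hFC _)
    -- inner Hoeffding
    have hosc : ∀ y x x', |F (x, y) - F (x', y)| ≤ c 0 := by
      intro y x x'
      refine (hbd _ _).trans ?_
      rw [Fin.sum_univ_succAbove _ 0]
      have hz : ∀ j : Fin n, (if (e.symm (x, y)) ((0:Fin (n+1)).succAbove j) ≠
          (e.symm (x', y)) ((0:Fin (n+1)).succAbove j) then c ((0:Fin (n+1)).succAbove j) else 0)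
          = 0 := by
        intro j
        rw [hcoordsa, hcoordsa]
        exact if_neg (fun h => h rfl)
      rw [Finset.sum_congr rfl (fun j _ => hz j), Finset.sum_const_zero, add_zero]
      split <;> simp [hc 0]
    have hinner : ∀ y, ∫ x, exp (t * F (x, y)) ∂ν ≤ exp (t * g y + t^2 * (c 0)^2/8) :=
      fun y => hoeffding_lemma_osc ν (hFym y) (fun x x' => hosc y x x') t
    -- bounded differences of g
    have hbdg : ∀ y y', |g y - g y'| ≤
        ∑ j, if y j ≠ y' j then c ((0 : Fin (n+1)).succAbove j) else 0 := by
      intro y y'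
      have hdiff : g y - g y' = ∫ x, (F (x, y) - F (x, y')) ∂ν := by
        rw [integral_sub (integrable_of_abs_le (hFym y).aestronglyMeasurable (fun x => hFC _))
          (integrable_of_abs_le (hFym y').aestronglyMeasurable (fun x => hFC _))]
      rw [hdiff]
      apply abs_integral_le_of_abs_le
        (((hFym y).sub (hFym y')).aestronglyMeasurable)
      intro x
      refine (hbd _ _).trans ?_
      rw [Fin.sum_univ_succAbove _ 0]
      have h0 : (if (e.symm (x, y)) 0 ≠ (e.symm (x, y')) 0 then c 0 else 0) = 0 := by
        rw [hcoord0, hcoord0]; simp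
      rw [h0, zero_add]
      apply Finset.sum_le_sum
      intro j _
      rw [hcoordsa, hcoordsa]
    -- Fubini and assembly
    have hswap : ∫ z, exp (t * F z) ∂(ν.prod π')
        = ∫ y, ∫ x, exp (t * F (x, y)) ∂ν ∂π' :=
      integral_prod_symm _ hFexpint
    have hswapF : ∫ z, F z ∂(ν.prod π') = ∫ y, g y ∂π' :=
      integral_prod_symm _ hFint
    -- LHS of integral_mono : y ↦ inner integral
    have hinnm : Integrable (fun y => ∫ x, exp (t * F (x, y)) ∂ν) π' := by
      apply integrable_of_abs_le
        (((hFm.const_mul t).exp.stronglyMeasurable.integral_prod_left').measurable).aestronglyMeasurable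
      intro y
      exact abs_integral_le_of_abs_le ((hFym y).const_mul t).exp.aestronglyMeasurable
        (fun x => hexpC _ (hFC _))
    have hrhsm : Integrable (fun y => exp (t * g y + t^2 * (c 0)^2/8)) π' := by
      apply integrable_of_abs_le (((hgm.const_mul t).add_const _).exp).aestronglyMeasurable
        (C := exp (|t| * C + t^2 * (c 0)^2/8))
      intro y
      rw [abs_of_pos (exp_pos _), exp_le_exp]
      have := hexpC _ (hgC y)
      rw [abs_of_pos (exp_pos _), exp_le_exp] at this
      linarith
    have hgexpint : Integrable (fun y => exp (t * g y)) π' :=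
      integrable_of_abs_le ((hgm.const_mul t).exp).aestronglyMeasurable
        (fun y => hexpC _ (hgC y))
    have hIH := ih (fun j => μ ((0 : Fin (n+1)).succAbove j))
      (fun j => c ((0 : Fin (n+1)).succAbove j)) (fun j => hc _) g hgm hbdg t
    calc ∫ x, exp (t * f x) ∂Measure.pi μ
        = ∫ y, ∫ x, exp (t * F (x, y)) ∂ν ∂π' := by rw [← h1, hswap]
      _ ≤ ∫ y, exp (t * g y + t^2 * (c 0)^2/8) ∂π' :=
          integral_mono hinnm hrhsm (fun y => hinner y)
      _ = exp (t^2 * (c 0)^2/8) * ∫ y, exp (t * g y) ∂π' := by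
          simp_rw [exp_add, mul_comm (exp (t * g _)) (exp (t^2 * (c 0)^2/8))]
          rw [integral_const_mul]
      _ ≤ exp (t^2 * (c 0)^2/8) *
          exp (t * ∫ y, g y ∂π' + t^2 * (∑ j, (c ((0 : Fin (n+1)).succAbove j))^2)/8) :=
          mul_le_mul_of_nonneg_left hIH (exp_pos _).le
      _ = exp (t * ∫ x, f x ∂Measure.pi μ + t^2 * (∑ i, (c i)^2)/8) := by
          rw [← exp_add, ← h2, hswapF, Fin.sum_univ_succAbove (fun i => (c i)^2) 0]
          ring_nf

/-- McDiarmid's bounded differences inequality. -/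
theorem mcdiarmid_bounded_differences
    {n : ℕ} {Ω : Type*} [MeasureSpace Ω] [IsProbabilityMeasure (ℙ : Measure Ω)]
    {𝒳 : Fin n → Type*} [∀ i, MeasurableSpace (𝒳 i)]
    (X : ∀ i, Ω → 𝒳 i) (hXm : ∀ i, Measurable (X i))
    (hXindep : iIndepFun X ℙ)
    (c : Fin n → ℝ) (hc : ∀ i, 0 ≤ c i)
    (f : (∀ i, 𝒳 i) → ℝ) (hf : Measurable f)
    (hint : Integrable (fun ω => f (fun i => X i ω)) ℙ)
    (hbd : ∀ x y : ∀ i, 𝒳 i, |f x - f y| ≤ ∑ i, if x i ≠ y i then c i else 0)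
    (ε : ℝ) (hε : 0 ≤ ε) :
    ℙ {ω | f (fun i => X i ω) ≥ (∫ ω, f (fun i => X i ω)) + ε}
      ≤ ENNReal.ofReal (Real.exp (-2 * ε ^ 2 / ∑ i, c i ^ 2)) := by
  -- trivial case : ∑ c i ^ 2 = 0
  by_cases hS : (∑ i, c i ^ 2) = 0
  · rw [hS, div_zero, Real.exp_zero, ENNReal.ofReal_one]
    exact prob_le_one
  have hSpos : 0 < ∑ i, c i ^ 2 :=
    lt_of_le_of_ne (Finset.sum_nonneg fun i _ => sq_nonneg _) (Ne.symm hS)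
  set S : ℝ := ∑ i, c i ^ 2 with hSdef
  -- nonemptiness
  have hΩne : Nonempty Ω := by
    by_contra h
    rw [not_nonempty_iff] at h
    have h1 : (ℙ : Measure Ω) Set.univ = 1 := measure_univ
    rw [Set.univ_eq_empty_iff.2 h] at h1
    simp at h1
  have h𝒳ne : ∀ i, Nonempty (𝒳 i) := fun i => ⟨X i (Classical.arbitrary Ω)⟩
  -- push forward
  set T : Ω → ∀ i, 𝒳 i := fun ω i => X i ω with hT
  have hTm : Measurable T := measurable_pi_lambda _ hXm
  set Pmap : Measure (∀ i, 𝒳 i) := (ℙ : Measure Ω).map T with hPmapdef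
  have : IsProbabilityMeasure Pmap := Measure.isProbabilityMeasure_map hTm.aemeasurable
  have hmap : Pmap = Measure.pi (fun i => (ℙ : Measure Ω).map (X i)) := by
    refine (Measure.pi_eq fun s hs => ?_).symm
    rw [hPmapdef, Measure.map_apply hTm (MeasurableSet.pi (Set.countable_univ) (fun i _ => hs i))]
    have hpre : T ⁻¹' (Set.pi Set.univ s) = ⋂ i ∈ Finset.univ, X i ⁻¹' s i := by
      ext ω
      simp [hT, Set.mem_pi]
    rw [hpre, hXindep.measure_inter_preimage_eq_mul Finset.univ (fun i _ => hs i)]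
    exact Finset.prod_congr rfl fun i _ => (Measure.map_apply (hXm i) (hs i)).symm
  have hmapinst : ∀ i, IsProbabilityMeasure ((ℙ : Measure Ω).map (X i)) :=
    fun i => Measure.isProbabilityMeasure_map (hXm i).aemeasurable
  -- mean
  set m : ℝ := ∫ ω, f (fun i => X i ω) with hm
  have hmPmap : m = ∫ x, f x ∂Pmap := by
    rw [hPmapdef, integral_map hTm.aemeasurable hf.aestronglyMeasurable]
  -- boundedness of f
  have x₀ : ∀ i, 𝒳 i := Classical.arbitrary _
  have hsum_bd : ∀ x y, |f x - f y| ≤ ∑ i, c i := fun x y =>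
    (hbd x y).trans (Finset.sum_le_sum fun i _ => by split <;> simp [hc i])
  set C : ℝ := |f x₀| + ∑ i, c i with hC
  have hfC : ∀ x, |f x| ≤ C := by
    intro x
    calc |f x| = |(f x - f x₀) + f x₀| := by ring_nf
      _ ≤ |f x - f x₀| + |f x₀| := abs_add_le _ _
      _ ≤ C := by rw [hC]; linarith [hsum_bd x x₀]
  -- Chernoff
  set t : ℝ := 4 * ε / S with htdef
  have ht : 0 ≤ t := by positivity
  have hexpint : Integrable (fun x => exp (t * f x)) Pmap := by
    refine integrable_of_abs_le ((hf.const_mul t).exp).aestronglyMeasurable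
      (C := exp (|t| * C)) (fun x => ?_)
    rw [abs_of_pos (exp_pos _)]
    apply exp_le_exp.2
    calc t * f x ≤ |t * f x| := le_abs_self _
      _ = |t| * |f x| := abs_mul _ _
      _ ≤ |t| * C := mul_le_mul_of_nonneg_left (hfC x) (abs_nonneg t)
  have hchernoff := measure_ge_le_exp_mul_mgf (X := f) (μ := Pmap) (t := t) (m + ε) ht hexpint
  -- mgf bound
  have hmgf : mgf f Pmap t ≤ exp (t * m + t^2 * S / 8) := by
    have := mgf_pi_le n (fun i => (ℙ : Measure Ω).map (X i)) c hc f hf hbd t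
    rw [← hmap] at this
    rw [← hmPmap] at this
    unfold mgf
    simpa using this
  have hreal : exp (-t * (m + ε)) * mgf f Pmap t ≤ exp (-2 * ε^2 / S) := by
    calc exp (-t * (m + ε)) * mgf f Pmap t
        ≤ exp (-t * (m + ε)) * exp (t * m + t^2 * S / 8) :=
          mul_le_mul_of_nonneg_left hmgf (exp_pos _).le
      _ = exp (-t * ε + t^2 * S / 8) := by rw [← exp_add]; ring_nf
      _ = exp (-2 * ε^2 / S) := by
          congr 1
          rw [htdef]
          field_simp
          ring
  -- assemble
  have hsetm : MeasurableSet {x : ∀ i, 𝒳 i | m + ε ≤ f x} :=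
    measurableSet_le measurable_const hf
  have hset : ℙ {ω | f (fun i => X i ω) ≥ m + ε} = Pmap {x | m + ε ≤ f x} := by
    rw [hPmapdef, Measure.map_apply hTm hsetm]
    rfl
  rw [hset]
  have hne : Pmap {x | m + ε ≤ f x} ≠ ⊤ := measure_ne_top _ _
  rw [← ENNReal.ofReal_toReal hne]
  exact ENNReal.ofReal_le_ofReal (le_trans hchernoff hreal)
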